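/- Let d ≥ 1, let Λ be a finite nonempty type, and let (F, G) with F, G : Λ → Matrix (Fin d) (Fin d) ℂ be a dual frame pair, i.e. every matrix O satisfies O = Σ_{λ∈Λ} Tr(F(λ) * O) • G(λ). For a matrix U define W_U(λ'|λ) := Tr(F(λ') * U * G(λ) * Uᴴ) and the gate negativity N_U := max_{λ∈Λ} Σ_{λ'∈Λ} |W_U(λ'|λ)|. Then for any two matrices U, V: N_{V*U} ≤ N_V · N_U. -/

import Mathlib

open Matrix

/-- The negativity of a gate `U` in the frame with frame operators `F` and dual
frame operators `G`: the maximal column ℓ1-norm of the transition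
quasi-probability kernel `W_U(λ'|λ) = Tr(F(λ') * U * G(λ) * Uᴴ)`. -/
noncomputable def gateNegativity {d : ℕ} {Λ : Type*} [Fintype Λ] [Nonempty Λ]
    (F G : Λ → Matrix (Fin d) (Fin d) ℂ) (U : Matrix (Fin d) (Fin d) ℂ) : ℝ :=
  Finset.univ.sup' Finset.univ_nonempty fun lam : Λ =>
    ∑ lam' : Λ, ‖(F lam' * U * G lam * Uᴴ).trace‖

theorem merged_gate_negativity_submultiplicative
    {d : ℕ} (hd : 1 ≤ d) {Λ : Type*} [Fintype Λ] [Nonempty Λ]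
    (F G : Λ → Matrix (Fin d) (Fin d) ℂ)
    (hdual : ∀ O : Matrix (Fin d) (Fin d) ℂ,
      O = ∑ μ : Λ, (F μ * O).trace • G μ)
    (U V : Matrix (Fin d) (Fin d) ℂ) :
    gateNegativity F G (V * U) ≤ gateNegativity F G V * gateNegativity F G U := by
  have hNV : ∀ μ : Λ, ∑ lam' : Λ, ‖(F lam' * V * G μ * Vᴴ).trace‖
      ≤ gateNegativity F G V := fun μ => by
    exact Finset.le_sup' (fun μ : Λ => ∑ lam' : Λ, ‖(F lam' * V * G μ * Vᴴ).trace‖) (Finset.mem_univ μ)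
  have hNV0 : 0 ≤ gateNegativity F G V := by
    obtain ⟨μ⟩ := ‹Nonempty Λ›
    refine le_trans ?_ (hNV μ)
    positivity
  unfold gateNegativity
  apply Finset.sup'_le
  intro lam _
  have key : ∀ lam' : Λ, (F lam' * (V * U) * G lam * (V * U)ᴴ).trace
      = ∑ μ : Λ, (F μ * U * G lam * Uᴴ).trace * (F lam' * V * G μ * Vᴴ).trace := by
    intro lam'
    have h1 : F lam' * (V * U) * G lam * (V * U)ᴴ
        = F lam' * V * (U * G lam * Uᴴ) * Vᴴ := by
      rw [conjTranspose_mul]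
      noncomm_ring
    rw [h1]
    conv_lhs => rw [hdual (U * G lam * Uᴴ)]
    rw [Finset.mul_sum, Finset.sum_mul, trace_sum]
    refine Finset.sum_congr rfl fun μ _ => ?_
    rw [mul_smul_comm, smul_mul_assoc, trace_smul, smul_eq_mul]
    simp [mul_assoc]
  calc ∑ lam' : Λ, ‖(F lam' * (V * U) * G lam * (V * U)ᴴ).trace‖
      ≤ ∑ lam' : Λ, ∑ μ : Λ, ‖(F μ * U * G lam * Uᴴ).trace‖
          * ‖(F lam' * V * G μ * Vᴴ).trace‖ := by
        refine Finset.sum_le_sum fun lam' _ => ?_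
        rw [key lam']
        refine le_trans (norm_sum_le _ _) ?_
        simp [norm_mul]
    _ = ∑ μ : Λ, ‖(F μ * U * G lam * Uᴴ).trace‖
          * ∑ lam' : Λ, ‖(F lam' * V * G μ * Vᴴ).trace‖ := by
        rw [Finset.sum_comm]
        simp [Finset.mul_sum]
    _ ≤ ∑ μ : Λ, ‖(F μ * U * G lam * Uᴴ).trace‖ * gateNegativity F G V := by
        refine Finset.sum_le_sum fun μ _ => ?_
        exact mul_le_mul_of_nonneg_left (hNV μ) (by positivity)
    _ = gateNegativity F G V * ∑ μ : Λ, ‖(F μ * U * G lam * Uᴴ).trace‖ := by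
        rw [← Finset.sum_mul, mul_comm]
    _ ≤ gateNegativity F G V * gateNegativity F G U :=
        mul_le_mul_of_nonneg_left (Finset.le_sup' (fun lam : Λ => ∑ lam' : Λ, ‖(F lam' * U * G lam * Uᴴ).trace‖) (Finset.mem_univ lam)) hNV0
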